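/- Let N ≥ 1 be an integer and let ρ_N be the unscaled GSE eigenvalue density. Then ρ_N satisfies, for every real x, the fifth order linear ordinary differential equation −(1/4)·ρ_N^{(5)}(x) + 5·((1/4)·x² − N − 1/4)·ρ_N'''(x) − (3/2)·x·ρ_N''(x) + (−x⁴ + (8N+2)·x² − 16N² − 8N + 1/2)·ρ_N'(x) + x·(x² − 4N − 1)·ρ_N(x) = 0. -/

import Mathlib

open Nat MeasureTheory

/-- The physicists' Hermite polynomials, via the recurrence
`H_0 = 1`, `H_1 = 2x`, `H_{n+2}(x) = 2x·H_{n+1}(x) − 2(n+1)·H_n(x)`. -/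
def Hphys : ℕ → ℝ → ℝ
  | 0 => fun _ => 1
  | 1 => fun x => 2 * x
  | n + 2 => fun x => 2 * x * Hphys (n + 1) x - 2 * ((n : ℝ) + 1) * Hphys n x

/-- `Q_n(x) = ∫_{−∞}^{x} e^{−t²/2} H_n(t) dt`. -/
noncomputable def Qfun (n : ℕ) (x : ℝ) : ℝ :=
  ∫ t in Set.Iic x, Real.exp (-t ^ 2 / 2) * Hphys n t

/-- `B_N = √π·2^{2N+1}·(2N−1)!`. -/
noncomputable def Bconst (N : ℕ) : ℝ :=
  Real.sqrt Real.pi * 2 ^ (2 * N + 1) * ((2 * N - 1)! : ℝ)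

/-- The (unscaled) GSE eigenvalue density
`ρ_N(x) = B_N⁻¹(e^{−x²}(H_{2N}'H_{2N−1} − H_{2N}H_{2N−1}') + e^{−x²/2}H_{2N}Q_{2N−1})`. -/
noncomputable def gseDensity (N : ℕ) (x : ℝ) : ℝ :=
  (Bconst N)⁻¹ *
    (Real.exp (-x ^ 2) *
        (deriv (Hphys (2 * N)) x * Hphys (2 * N - 1) x -
          Hphys (2 * N) x * deriv (Hphys (2 * N - 1)) x) +
      Real.exp (-x ^ 2 / 2) * Hphys (2 * N) x * Qfun (2 * N - 1) x)

/-! ### Auxiliary lemmas -/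

/-- Formal derivative values for `Hphys`. -/
noncomputable def Hd : ℕ → ℝ → ℝ
  | 0 => fun _ => 0
  | n + 1 => fun x => 2 * ((n : ℝ) + 1) * Hphys n x

lemma hphys_hasDerivAt' : ∀ (n : ℕ) (x : ℝ), HasDerivAt (Hphys n) (Hd n x) x
  | 0, x => hasDerivAt_const x 1
  | 1, x => by
    have h : HasDerivAt (fun y : ℝ => 2 * y) 2 x := by
      simpa using (hasDerivAt_id x).const_mul (2 : ℝ)
    convert h using 1
    all_goals norm_num [Hd, Hphys]
  | (n + 2), x => by
    have ih1 := hphys_hasDerivAt' (n + 1) x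
    have ih0 := hphys_hasDerivAt' n x
    have key : HasDerivAt (fun y : ℝ => 2 * y * Hphys (n + 1) y - 2 * ((n : ℝ) + 1) * Hphys n y)
        ((2 * 1 * Hphys (n + 1) x + 2 * x * Hd (n + 1) x) - 2 * ((n : ℝ) + 1) * Hd n x) x := by
      exact (((hasDerivAt_id x).const_mul 2).mul ih1).sub (ih0.const_mul _)
    convert key using 1
    · funext y; simp only [Hphys]
    · rcases n with - | m
      · norm_num [Hd, Hphys]; ring
      · simp only [Hd, Hphys]
        push_cast
        ring

lemma hphys_hasDerivAt (n : ℕ) (x : ℝ) :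
    HasDerivAt (Hphys (n + 1)) (2 * ((n : ℝ) + 1) * Hphys n x) x := by
  simpa [Hd] using hphys_hasDerivAt' (n + 1) x

lemma hphys_cont (n : ℕ) : Continuous (Hphys n) := by
  rcases n with - | m
  · exact continuous_const
  · exact Differentiable.continuous fun y => (hphys_hasDerivAt m y).differentiableAt

lemma hphys_poly : ∀ n : ℕ, ∃ p : Polynomial ℝ, ∀ x, Hphys n x = p.eval x
  | 0 => ⟨1, fun x => by simp [Hphys]⟩
  | 1 => ⟨Polynomial.C 2 * Polynomial.X, fun x => by simp [Hphys]⟩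
  | (n + 2) => by
    obtain ⟨p, hp⟩ := hphys_poly (n + 1)
    obtain ⟨q, hq⟩ := hphys_poly n
    exact ⟨Polynomial.C 2 * Polynomial.X * p - Polynomial.C (2 * ((n : ℝ) + 1)) * q,
      fun x => by simp [Hphys, hp, hq]⟩

lemma integrable_gauss_poly (p : Polynomial ℝ) :
    Integrable (fun t : ℝ => Real.exp (-t ^ 2 / 2) * p.eval t) := by
  induction p using Polynomial.induction_on' with
  | add p q hp hq => simpa [mul_add, Pi.add_def] using hp.add hq
  | monomial k a =>
    have h : Integrable (fun t : ℝ => t ^ ((k : ℕ) : ℝ) * Real.exp (-(1/2) * t ^ 2)) :=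
      integrable_rpow_mul_exp_neg_mul_sq (by norm_num)
        (lt_of_lt_of_le neg_one_lt_zero (Nat.cast_nonneg k))
    have h2 := h.const_mul a
    have he : (fun t : ℝ => Real.exp (-t ^ 2 / 2) * (Polynomial.monomial k a).eval t)
        = fun t : ℝ => a * (t ^ ((k : ℕ) : ℝ) * Real.exp (-(1/2) * t ^ 2)) := by
      funext t
      rw [Real.rpow_natCast, show (-(1/2) * t ^ 2 : ℝ) = -t ^ 2 / 2 by ring]
      simp [Polynomial.eval_monomial]
      ring
    rw [he]
    exact h2

lemma integrable_gauss_hphys (n : ℕ) :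
    Integrable (fun t : ℝ => Real.exp (-t ^ 2 / 2) * Hphys n t) := by
  obtain ⟨p, hp⟩ := hphys_poly n
  simpa [hp] using integrable_gauss_poly p

/-- `Ef x = e^{-x²/2}`. -/
noncomputable def Ef (x : ℝ) : ℝ := Real.exp (-x ^ 2 / 2)

lemma Ef_hasDerivAt (x : ℝ) : HasDerivAt Ef (-x * Ef x) x := by
  have h : HasDerivAt (fun y : ℝ => -y ^ 2 / 2) (-x) x := by
    have := (hasDerivAt_pow 2 x).neg.div_const 2
    refine this.congr_deriv ?_
    norm_num
    ring
  have h2 := h.exp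
  show HasDerivAt (fun y => Real.exp (-y ^ 2 / 2)) (-x * Ef x) x
  simpa [Ef, mul_comm] using h2

lemma qfun_hasDerivAt (n : ℕ) (x : ℝ) :
    HasDerivAt (Qfun n) (Ef x * Hphys n x) x := by
  set f : ℝ → ℝ := fun t => Real.exp (-t ^ 2 / 2) * Hphys n t with hf
  have hInt : Integrable f := integrable_gauss_hphys n
  have hcont : Continuous f := by
    apply Continuous.mul _ (hphys_cont n)
    exact Real.continuous_exp.comp (by continuity)
  have key : ∀ y : ℝ, Qfun n y = Qfun n 0 + ∫ t in (0:ℝ)..y, f t := by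
    intro y
    rw [← intervalIntegral.integral_Iic_sub_Iic hInt.integrableOn hInt.integrableOn]
    simp only [Qfun]
    ring
  have h2 : HasDerivAt (fun y : ℝ => Qfun n 0 + ∫ t in (0:ℝ)..y, f t) (f x) x := by
    exact (intervalIntegral.integral_hasDerivAt_right (hInt.intervalIntegrable)
      (hcont.stronglyMeasurableAtFilter _ _) hcont.continuousAt).const_add _
  have h3 : HasDerivAt (Qfun n) (f x) x :=
    h2.congr_of_eventuallyEq (Filter.Eventually.of_forall key)
  simpa [Ef, hf] using h3

lemma hH_hasDerivAt (N : ℕ) (hN : 1 ≤ N) (x : ℝ) :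
    HasDerivAt (Hphys (2 * N)) (4 * (N : ℝ) * Hphys (2 * N - 1) x) x := by
  obtain ⟨M, rfl⟩ : ∃ M, N = M + 1 := ⟨N - 1, by omega⟩
  have e1 : 2 * (M + 1) = (2 * M + 1) + 1 := by omega
  have e2 : 2 * (M + 1) - 1 = 2 * M + 1 := by omega
  rw [e2, e1]
  convert hphys_hasDerivAt (2 * M + 1) x using 1
  push_cast
  ring

lemma hG_hasDerivAt (N : ℕ) (hN : 1 ≤ N) (x : ℝ) :
    HasDerivAt (Hphys (2 * N - 1))
      (2 * x * Hphys (2 * N - 1) x - Hphys (2 * N) x) x := by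
  obtain ⟨M, rfl⟩ : ∃ M, N = M + 1 := ⟨N - 1, by omega⟩
  have e1 : 2 * (M + 1) = (2 * M) + 2 := by omega
  have e2 : 2 * (M + 1) - 1 = 2 * M + 1 := by omega
  rw [e2, e1]
  convert hphys_hasDerivAt (2 * M) x using 1
  show 2 * x * Hphys (2 * M + 1) x - Hphys (2 * M + 2) x = _
  simp only [Hphys]
  push_cast
  ring

/-- The master combination function. -/
noncomputable def Wf (N : ℕ) (a b c d e : ℝ → ℝ) (x : ℝ) : ℝ :=
  Ef x * Qfun (2 * N - 1) x * (Hphys (2 * N) x * a x + Hphys (2 * N - 1) x * b x)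
    + Ef x ^ 2 * (Hphys (2 * N - 1) x ^ 2 * c x
      + Hphys (2 * N) x * Hphys (2 * N - 1) x * d x + Hphys (2 * N) x ^ 2 * e x)

lemma Wf_hasDerivAt (N : ℕ) (hN : 1 ≤ N) {a b c d e : ℝ → ℝ} {a' b' c' d' e' x : ℝ}
    (ha : HasDerivAt a a' x) (hb : HasDerivAt b b' x) (hc : HasDerivAt c c' x)
    (hd : HasDerivAt d d' x) (he : HasDerivAt e e' x) :
    HasDerivAt (Wf N a b c d e)
      (Ef x * Qfun (2 * N - 1) x * (Hphys (2 * N) x * (a' - x * a x - b x)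
          + Hphys (2 * N - 1) x * (4 * (N : ℝ) * a x + x * b x + b'))
        + Ef x ^ 2 * (Hphys (2 * N - 1) x ^ 2 * (b x + 2 * x * c x + 4 * (N : ℝ) * d x + c')
          + Hphys (2 * N) x * Hphys (2 * N - 1) x
              * (a x - 2 * c x + 8 * (N : ℝ) * e x + d')
          + Hphys (2 * N) x ^ 2 * (-(d x) - 2 * x * e x + e'))) x := by
  have hH := hH_hasDerivAt N hN x
  have hG := hG_hasDerivAt N hN x
  have hQ := qfun_hasDerivAt (2 * N - 1) x
  have hE := Ef_hasDerivAt x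
  have key := (((hE.mul hQ).mul ((hH.mul ha).add (hG.mul hb))).add
    ((hE.pow 2).mul ((((hG.pow 2).mul hc).add ((hH.mul hG).mul hd)).add ((hH.pow 2).mul he))))
  refine key.congr_deriv ?_
  norm_num
  ring

lemma hasDerivAt_poly5 (c0 c1 c2 c3 c4 c5 x : ℝ) :
    HasDerivAt (fun y : ℝ => c0 + c1*y + c2*y^2 + c3*y^3 + c4*y^4 + c5*y^5)
      (c1 + 2*c2*x + 3*c3*x^2 + 4*c4*x^3 + 5*c5*x^4) x := by
  have h := (((((hasDerivAt_const x c0).add ((hasDerivAt_id x).const_mul c1)).add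
    ((hasDerivAt_pow 2 x).const_mul c2)).add ((hasDerivAt_pow 3 x).const_mul c3)).add
    ((hasDerivAt_pow 4 x).const_mul c4)).add ((hasDerivAt_pow 5 x).const_mul c5)
  refine h.congr_deriv ?_
  norm_num
  ring

noncomputable def W0 (N : ℕ) : ℝ → ℝ :=
  Wf N (fun y : ℝ => ((1:ℝ)) + ((0:ℝ))*y + ((0:ℝ))*y^2 + ((0:ℝ))*y^3 + ((0:ℝ))*y^4 + ((0:ℝ))*y^5) (fun y : ℝ => ((0:ℝ)) + ((0:ℝ))*y + ((0:ℝ))*y^2 + ((0:ℝ))*y^3 + ((0:ℝ))*y^4 + ((0:ℝ))*y^5) (fun y : ℝ => ((4:ℝ)*(N:ℝ)) + ((0:ℝ))*y + ((0:ℝ))*y^2 + ((0:ℝ))*y^3 + ((0:ℝ))*y^4 + ((0:ℝ))*y^5) (fun y : ℝ => ((0:ℝ)) + ((-2:ℝ))*y + ((0:ℝ))*y^2 + ((0:ℝ))*y^3 + ((0:ℝ))*y^4 + ((0:ℝ))*y^5) (fun y : ℝ => ((1:ℝ)) + ((0:ℝ))*y + ((0:ℝ))*y^2 + ((0:ℝ))*y^3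 + ((0:ℝ))*y^4 + ((0:ℝ))*y^5)

noncomputable def W1 (N : ℕ) : ℝ → ℝ :=
  Wf N (fun y : ℝ => ((0:ℝ)) + ((-1:ℝ))*y + ((0:ℝ))*y^2 + ((0:ℝ))*y^3 + ((0:ℝ))*y^4 + ((0:ℝ))*y^5) (fun y : ℝ => ((4:ℝ)*(N:ℝ)) + ((0:ℝ))*y + ((0:ℝ))*y^2 + ((0:ℝ))*y^3 + ((0:ℝ))*y^4 + ((0:ℝ))*y^5) (fun y : ℝ => ((0:ℝ)) + ((0:ℝ))*y + ((0:ℝ))*y^2 + ((0:ℝ))*y^3 + ((0:ℝ))*y^4 + ((0:ℝ))*y^5) (fun y : ℝ => ((-1:ℝ)) + ((0:ℝ))*y + ((0:ℝ))*y^2 + ((0:ℝ))*y^3 + ((0:ℝ))*y^4 + ((0:ℝ))*y^5) (fun y : ℝ => ((0:ℝ)) + ((0:ℝ))*y + ((0:ℝ))*y^2 + ((0:ℝ))*y^3 + ((0:ℝ))*y^4 + ((0:ℝ))*y^5)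

noncomputable def W2 (N : ℕ) : ℝ → ℝ :=
  Wf N (fun y : ℝ => ((-1:ℝ) + (-4:ℝ)*(N:ℝ)) + ((0:ℝ))*y + ((1:ℝ))*y^2 + ((0:ℝ))*y^3 + ((0:ℝ))*y^4 + ((0:ℝ))*y^5) (fun y : ℝ => ((0:ℝ)) + ((0:ℝ))*y + ((0:ℝ))*y^2 + ((0:ℝ))*y^3 + ((0:ℝ))*y^4 + ((0:ℝ))*y^5) (fun y : ℝ => ((0:ℝ)) + ((0:ℝ))*y + ((0:ℝ))*y^2 + ((0:ℝ))*y^3 + ((0:ℝ))*y^4 + ((0:ℝ))*y^5) (fun y : ℝ => ((0:ℝ)) + ((-1:ℝ))*y + ((0:ℝ))*y^2 + ((0:ℝ))*y^3 + ((0:ℝ))*y^4 + ((0:ℝ))*y^5) (fun y : ℝ => ((1:ℝ)) + ((0:ℝ))*y + ((0:ℝ))*y^2 + ((0:ℝ))*y^3 + ((0:ℝ))*y^4 + ((0:ℝ))*y^5)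

noncomputable def W3 (N : ℕ) : ℝ → ℝ :=
  Wf N (fun y : ℝ => ((0:ℝ)) + ((3:ℝ) + (4:ℝ)*(N:ℝ))*y + ((0:ℝ))*y^2 + ((-1:ℝ))*y^3 + ((0:ℝ))*y^4 + ((0:ℝ))*y^5) (fun y : ℝ => ((-4:ℝ)*(N:ℝ) + (-16:ℝ)*(N:ℝ)^2) + ((0:ℝ))*y + ((4:ℝ)*(N:ℝ))*y^2 + ((0:ℝ))*y^3 + ((0:ℝ))*y^4 + ((0:ℝ))*y^5) (fun y : ℝ => ((0:ℝ)) + ((-4:ℝ)*(N:ℝ))*y + ((0:ℝ))*y^2 + ((0:ℝ))*y^3 + ((0:ℝ))*y^4 + ((0:ℝ))*y^5) (fun y : ℝ => ((-2:ℝ) + (4:ℝ)*(N:ℝ)) + ((0:ℝ))*y + ((1:ℝ))*y^2 + ((0:ℝ))*y^3 + ((0:ℝ))*y^4 + ((0:ℝ))*y^5) (fun y : ℝ => ((0:ℝ)) + ((-1:ℝ))*y + ((0:ℝ))*y^2 + ((0:ℝ))*y^3 + ((0:ℝ))*y^4 + ((0:ℝ))*y^5)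

noncomputable def W4 (N : ℕ) : ℝ → ℝ :=
  Wf N (fun y : ℝ => ((3:ℝ) + (8:ℝ)*(N:ℝ) + (16:ℝ)*(N:ℝ)^2) + ((0:ℝ))*y + ((-6:ℝ) + (-8:ℝ)*(N:ℝ))*y^2 + ((0:ℝ))*y^3 + ((1:ℝ))*y^4 + ((0:ℝ))*y^5) (fun y : ℝ => ((0:ℝ)) + ((16:ℝ)*(N:ℝ))*y + ((0:ℝ))*y^2 + ((0:ℝ))*y^3 + ((0:ℝ))*y^4 + ((0:ℝ))*y^5) (fun y : ℝ => ((-16:ℝ)*(N:ℝ)) + ((0:ℝ))*y + ((0:ℝ))*y^2 + ((0:ℝ))*y^3 + ((0:ℝ))*y^4 + ((0:ℝ))*y^5) (fun y : ℝ => ((0:ℝ)) + ((5:ℝ) + (4:ℝ)*(N:ℝ))*y + ((0:ℝ))*y^2 + ((-1:ℝ))*y^3 + ((0:ℝ))*y^4 + ((0:ℝ))*y^5) (fun y : ℝ => ((1:ℝ) + (-4:ℝ)*(N:ℝ)) + ((0:ℝ))*y + ((1:ℝ))*y^2 + ((0:ℝ))*y^3 + ((0:ℝ))*y^4 + ((0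:ℝ))*y^5)

noncomputable def W5 (N : ℕ) : ℝ → ℝ :=
  Wf N (fun y : ℝ => ((0:ℝ)) + ((-15:ℝ) + (-40:ℝ)*(N:ℝ) + (-16:ℝ)*(N:ℝ)^2)*y + ((0:ℝ))*y^2 + ((10:ℝ) + (8:ℝ)*(N:ℝ))*y^3 + ((0:ℝ))*y^4 + ((-1:ℝ))*y^5) (fun y : ℝ => ((28:ℝ)*(N:ℝ) + (32:ℝ)*(N:ℝ)^2 + (64:ℝ)*(N:ℝ)^3) + ((0:ℝ))*y + ((-8:ℝ)*(N:ℝ) + (-32:ℝ)*(N:ℝ)^2)*y^2 + ((0:ℝ))*y^3 + ((4:ℝ)*(N:ℝ))*y^4 + ((0:ℝ))*y^5) (fun y : ℝ => ((0:ℝ)) + ((4:ℝ)*(N:ℝ) + (16:ℝ)*(N:ℝ)^2)*y + ((0:ℝ))*y^2 + ((-4:ℝ)*(N:ℝ))*y^3 + ((0:ℝ))*y^4 + ((0:ℝ))*y^5) (fun y : ℝ => ((8:ℝ) + (52:ℝ)*(N:ℝ) + (-16:ℝ)*(N:ℝ)^2) + ((0:ℝ))*y + ((-9:ℝ))*y^2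 + ((0:ℝ))*y^3 + ((1:ℝ))*y^4 + ((0:ℝ))*y^5) (fun y : ℝ => ((0:ℝ)) + ((-5:ℝ) + (4:ℝ)*(N:ℝ))*y + ((0:ℝ))*y^2 + ((-1:ℝ))*y^3 + ((0:ℝ))*y^4 + ((0:ℝ))*y^5)

lemma Wstep0 (N : ℕ) (hN : 1 ≤ N) (x : ℝ) : HasDerivAt (W0 N) (W1 N x) x := by
  have h := Wf_hasDerivAt N hN (hasDerivAt_poly5 ((1:ℝ)) ((0:ℝ)) ((0:ℝ)) ((0:ℝ)) ((0:ℝ)) ((0:ℝ)) x) (hasDerivAt_poly5 ((0:ℝ)) ((0:ℝ)) ((0:ℝ)) ((0:ℝ)) ((0:ℝ)) ((0:ℝ)) x) (hasDerivAt_poly5 ((4:ℝ)*(N:ℝ)) ((0:ℝ)) ((0:ℝ)) ((0:ℝ)) ((0:ℝ)) ((0:ℝ)) x) (hasDerivAt_poly5 ((0:ℝ)) ((-2:ℝ)) ((0:ℝ)) ((0:ℝ)) ((0:ℝ)) ((0:ℝ)) x) (hasDerivAt_poly5 ((1:ℝ)) ((0:ℝ)) ((0:ℝ)) ((0:ℝ))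 ((0:ℝ)) ((0:ℝ)) x)
  refine h.congr_deriv ?_
  simp only [W1, Wf]
  ring

lemma Wstep1 (N : ℕ) (hN : 1 ≤ N) (x : ℝ) : HasDerivAt (W1 N) (W2 N x) x := by
  have h := Wf_hasDerivAt N hN (hasDerivAt_poly5 ((0:ℝ)) ((-1:ℝ)) ((0:ℝ)) ((0:ℝ)) ((0:ℝ)) ((0:ℝ)) x) (hasDerivAt_poly5 ((4:ℝ)*(N:ℝ)) ((0:ℝ)) ((0:ℝ)) ((0:ℝ)) ((0:ℝ)) ((0:ℝ)) x) (hasDerivAt_poly5 ((0:ℝ)) ((0:ℝ)) ((0:ℝ)) ((0:ℝ)) ((0:ℝ)) ((0:ℝ)) x) (hasDerivAt_poly5 ((-1:ℝ)) ((0:ℝ)) ((0:ℝ)) ((0:ℝ)) ((0:ℝ)) ((0:ℝ)) x) (hasDerivAt_poly5 ((0:ℝ)) ((0:ℝ)) ((0:ℝ)) ((0:ℝ)) ((0:ℝ)) ((0:ℝ)) x)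
  refine h.congr_deriv ?_
  simp only [W2, Wf]
  ring

lemma Wstep2 (N : ℕ) (hN : 1 ≤ N) (x : ℝ) : HasDerivAt (W2 N) (W3 N x) x := by
  have h := Wf_hasDerivAt N hN (hasDerivAt_poly5 ((-1:ℝ) + (-4:ℝ)*(N:ℝ)) ((0:ℝ)) ((1:ℝ)) ((0:ℝ)) ((0:ℝ)) ((0:ℝ)) x) (hasDerivAt_poly5 ((0:ℝ)) ((0:ℝ)) ((0:ℝ)) ((0:ℝ)) ((0:ℝ)) ((0:ℝ)) x) (hasDerivAt_poly5 ((0:ℝ)) ((0:ℝ)) ((0:ℝ)) ((0:ℝ)) ((0:ℝ)) ((0:ℝ)) x) (hasDerivAt_poly5 ((0:ℝ)) ((-1:ℝ)) ((0:ℝ)) ((0:ℝ)) ((0:ℝ)) ((0:ℝ)) x) (hasDerivAt_poly5 ((1:ℝ)) ((0:ℝ)) ((0:ℝ)) ((0:ℝ)) ((0:ℝ)) ((0:ℝ)) x)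
  refine h.congr_deriv ?_
  simp only [W3, Wf]
  ring

lemma Wstep3 (N : ℕ) (hN : 1 ≤ N) (x : ℝ) : HasDerivAt (W3 N) (W4 N x) x := by
  have h := Wf_hasDerivAt N hN (hasDerivAt_poly5 ((0:ℝ)) ((3:ℝ) + (4:ℝ)*(N:ℝ)) ((0:ℝ)) ((-1:ℝ)) ((0:ℝ)) ((0:ℝ)) x) (hasDerivAt_poly5 ((-4:ℝ)*(N:ℝ) + (-16:ℝ)*(N:ℝ)^2) ((0:ℝ)) ((4:ℝ)*(N:ℝ)) ((0:ℝ)) ((0:ℝ)) ((0:ℝ)) x) (hasDerivAt_poly5 ((0:ℝ)) ((-4:ℝ)*(N:ℝ)) ((0:ℝ)) ((0:ℝ)) ((0:ℝ)) ((0:ℝ)) x) (hasDerivAt_poly5 ((-2:ℝ) + (4:ℝ)*(N:ℝ)) ((0:ℝ)) ((1:ℝ)) ((0:ℝ)) ((0:ℝ)) ((0:ℝ)) x) (hasDerivAt_poly5 ((0:ℝ)) ((-1:ℝ)) ((0:ℝ)) ((0:ℝ)) ((0:ℝ)) ((0:ℝ)) x)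
  refine h.congr_deriv ?_
  simp only [W4, Wf]
  ring

lemma Wstep4 (N : ℕ) (hN : 1 ≤ N) (x : ℝ) : HasDerivAt (W4 N) (W5 N x) x := by
  have h := Wf_hasDerivAt N hN (hasDerivAt_poly5 ((3:ℝ) + (8:ℝ)*(N:ℝ) + (16:ℝ)*(N:ℝ)^2) ((0:ℝ)) ((-6:ℝ) + (-8:ℝ)*(N:ℝ)) ((0:ℝ)) ((1:ℝ)) ((0:ℝ)) x) (hasDerivAt_poly5 ((0:ℝ)) ((16:ℝ)*(N:ℝ)) ((0:ℝ)) ((0:ℝ)) ((0:ℝ)) ((0:ℝ)) x) (hasDerivAt_poly5 ((-16:ℝ)*(N:ℝ)) ((0:ℝ)) ((0:ℝ)) ((0:ℝ)) ((0:ℝ)) ((0:ℝ)) x) (hasDerivAt_poly5 ((0:ℝ)) ((5:ℝ) + (4:ℝ)*(N:ℝ)) ((0:ℝ)) ((-1:ℝ)) ((0:ℝ)) ((0:ℝ)) x) (hasDerivAt_poly5 ((1:ℝ) + (-4:ℝ)*(N:ℝ)) ((0:ℝ)) ((1:ℝ)) ((0:ℝ)) ((0:ℝ)) ((0:ℝ))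 x)
  refine h.congr_deriv ?_
  simp only [W5, Wf]
  ring
/-- The unscaled GSE eigenvalue density satisfies the fifth order linear ODE
`−(1/4)ρ⁽⁵⁾ + 5((1/4)x²−N−1/4)ρ''' − (3/2)xρ''
  + (−x⁴+(8N+2)x²−16N²−8N+1/2)ρ' + x(x²−4N−1)ρ = 0`. -/
theorem gseDensity_ode (N : ℕ) (hN : 1 ≤ N) (x : ℝ) :
    -(1 / 4) * iteratedDeriv 5 (gseDensity N) x +
        5 * ((1 / 4) * x ^ 2 - (N : ℝ) - 1 / 4) * iteratedDeriv 3 (gseDensity N) x -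
        (3 / 2) * x * iteratedDeriv 2 (gseDensity N) x +
        (-x ^ 4 + (8 * (N : ℝ) + 2) * x ^ 2 - 16 * (N : ℝ) ^ 2 - 8 * (N : ℝ) + 1 / 2) *
          deriv (gseDensity N) x +
        x * (x ^ 2 - 4 * (N : ℝ) - 1) * gseDensity N x = 0 := by
  set c : ℝ := (Bconst N)⁻¹ with hc
  have h0 : gseDensity N = fun y => c * W0 N y := by
    funext y
    have e1 := (hH_hasDerivAt N hN y).deriv
    have e2 := (hG_hasDerivAt N hN y).deriv
    have e3 : Real.exp (-y ^ 2) = Ef y * Ef y := by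
      rw [Ef, ← Real.exp_add]
      congr 1
      ring
    simp only [gseDensity, W0, Wf, e1, e2, e3, hc]
    simp only [Ef]
    ring
  have d1 : deriv (gseDensity N) = fun y => c * W1 N y := by
    funext y
    rw [h0]
    exact ((Wstep0 N hN y).const_mul c).deriv
  have d2 : deriv (fun y => c * W1 N y) = fun y => c * W2 N y :=
    funext fun y => ((Wstep1 N hN y).const_mul c).deriv
  have d3 : deriv (fun y => c * W2 N y) = fun y => c * W3 N y :=
    funext fun y => ((Wstep2 N hN y).const_mul c).deriv
  have d4 : deriv (fun y => c * W3 N y) = fun y => c * W4 N y :=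
    funext fun y => ((Wstep3 N hN y).const_mul c).deriv
  have d5 : deriv (fun y => c * W4 N y) = fun y => c * W5 N y :=
    funext fun y => ((Wstep4 N hN y).const_mul c).deriv
  have j1 : iteratedDeriv 1 (gseDensity N) = fun y => c * W1 N y := by
    rw [iteratedDeriv_one, d1]
  have j2 : iteratedDeriv 2 (gseDensity N) = fun y => c * W2 N y := by
    rw [iteratedDeriv_succ, j1, d2]
  have j3 : iteratedDeriv 3 (gseDensity N) = fun y => c * W3 N y := by
    rw [iteratedDeriv_succ, j2, d3]
  have j4 : iteratedDeriv 4 (gseDensity N) = fun y => c * W4 N y := by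
    rw [iteratedDeriv_succ, j3, d4]
  have j5 : iteratedDeriv 5 (gseDensity N) = fun y => c * W5 N y := by
    rw [iteratedDeriv_succ, j4, d5]
  rw [j5, j3, j2, d1, h0]
  simp only [W0, W1, W2, W3, W4, W5, Wf]
  ring
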